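/- For t > 0, i ≥ 1 and s ∈ ℝ, define A_t(x) = t·x and B_{i,s}(x) = x + s·x^{1/(i+1)} (real power) for x ≥ 0. Then: (a) there exist K ≥ 1 and C ≥ 0 such that B_{i,s} is a (K,C)-quasi-isometry on [0,∞); and (b) for all x ≥ 0, A_t(B_{i,s}(x/t)) = x + s·t^{i/(i+1)}·x^{1/(i+1)}, i.e., A_t∘B_{i,s}∘A_t⁻¹ = B_{i, s·t^{i/(i+1)}} as maps on [0,∞). -/

import Mathlib

/-- `f` is a `(K,C)`-quasi-isometry on the set `S ⊆ ℝ`. -/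
def IsQIOn (K C : ℝ) (f : ℝ → ℝ) (S : Set ℝ) : Prop :=
  ∀ x ∈ S, ∀ y ∈ S,
    (1 / K) * |x - y| - C ≤ |f x - f y| ∧ |f x - f y| ≤ K * |x - y| + C

/-- The map `B_{i,s}(x) = x + s·x^{1/(i+1)}` (real power). -/
noncomputable def Bmap (i s : ℝ) (x : ℝ) : ℝ := x + s * x ^ ((1 : ℝ) / (i + 1))

lemma rpow_subadd {a b p : ℝ} (ha : 0 ≤ a) (hb : 0 ≤ b) (hp : 0 ≤ p) (hp1 : p ≤ 1) :
    (a + b) ^ p ≤ a ^ p + b ^ p := by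
  have := NNReal.rpow_add_le_add_rpow a.toNNReal b.toNNReal hp hp1
  have h := NNReal.coe_le_coe.2 this
  push_cast [NNReal.coe_rpow] at h
  rwa [Real.coe_toNNReal a ha, Real.coe_toNNReal b hb] at h

lemma abs_rpow_sub {p : ℝ} (hp : 0 ≤ p) (hp1 : p ≤ 1) :
    ∀ x y : ℝ, 0 ≤ x → 0 ≤ y → |x ^ p - y ^ p| ≤ |x - y| ^ p := by
  have key : ∀ x y : ℝ, 0 ≤ y → y ≤ x → |x ^ p - y ^ p| ≤ |x - y| ^ p := by
    intro x y hy hyx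
    have hxy : 0 ≤ x - y := by linarith
    rw [abs_of_nonneg hxy, abs_of_nonneg
      (sub_nonneg.2 (Real.rpow_le_rpow hy hyx hp))]
    have := rpow_subadd hxy hy hp hp1
    rw [sub_add_cancel] at this
    linarith
  intro x y hx hy
  rcases le_total y x with h | h
  · exact key x y hy h
  · rw [abs_sub_comm, abs_sub_comm x y]; exact key y x hx h

theorem stmt_7 (t i s : ℝ) (ht : 0 < t) (hi : 1 ≤ i) :
    (∃ K C : ℝ, 1 ≤ K ∧ 0 ≤ C ∧ IsQIOn K C (Bmap i s) (Set.Ici 0)) ∧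
    (∀ x ∈ Set.Ici (0 : ℝ),
      t * Bmap i s (x / t) = x + s * t ^ (i / (i + 1)) * x ^ ((1 : ℝ) / (i + 1))) := by
  set α : ℝ := (1 : ℝ) / (i + 1) with hα
  have hi1 : (0:ℝ) < i + 1 := by linarith
  have hα0 : 0 < α := by positivity
  have hα2 : α ≤ 1/2 := by
    rw [hα]
    rw [div_le_div_iff₀ hi1 two_pos]
    linarith
  have hα1 : α ≤ 1 := by linarith
  constructor
  · -- quasi-isometry
    set R : ℝ := max 1 ((2 * |s|) ^ (1 - α)⁻¹) with hR
    have hR1 : (1:ℝ) ≤ R := le_max_left _ _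
    refine ⟨2 + |s|, |s| + R, by linarith [abs_nonneg s], by positivity, ?_⟩
    intro x hx y hy
    simp only [Set.mem_Ici] at hx hy
    set r : ℝ := |x - y| with hr
    have hr0 : 0 ≤ r := abs_nonneg _
    have hd : |x ^ α - y ^ α| ≤ r ^ α := abs_rpow_sub hα0.le hα1 x y hx hy
    have hsd : |s| * |x ^ α - y ^ α| ≤ |s| * r ^ α :=
      mul_le_mul_of_nonneg_left hd (abs_nonneg s)
    have hBub : |Bmap i s x - Bmap i s y| ≤ r + |s| * r ^ α := by
      have : Bmap i s x - Bmap i s y = (x - y) + s * (x ^ α - y ^ α) := by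
        simp only [Bmap, ← hα]; ring
      rw [this]
      calc |(x - y) + s * (x ^ α - y ^ α)| ≤ |x - y| + |s * (x ^ α - y ^ α)| :=
            abs_add_le _ _
        _ = r + |s| * |x ^ α - y ^ α| := by rw [abs_mul]
        _ ≤ r + |s| * r ^ α := by linarith
    have hBlb : r - |s| * r ^ α ≤ |Bmap i s x - Bmap i s y| := by
      have : Bmap i s x - Bmap i s y = (x - y) + s * (x ^ α - y ^ α) := by
        simp only [Bmap, ← hα]; ring
      rw [this]
      have := abs_sub_abs_le_abs_sub (x - y) (-(s * (x ^ α - y ^ α)))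
      rw [abs_neg, sub_neg_eq_add, abs_mul] at this
      linarith
    have hra : r ^ α ≤ r + 1 := by
      rcases le_total r 1 with h | h
      · have := Real.rpow_le_one hr0 h hα0.le
        linarith
      · calc r ^ α ≤ r ^ (1:ℝ) := Real.rpow_le_rpow_of_exponent_le h hα1
          _ = r := Real.rpow_one r
        linarith
    constructor
    · -- lower bound
      rcases le_total R r with h | h
      · -- r large : |s| r^α ≤ r/2
        have hrpos : (0:ℝ) < r := lt_of_lt_of_le one_pos (hR1.trans h)
        have h2s : 2 * |s| ≤ r ^ (1 - α) := by
          have hne : (1 : ℝ) - α ≠ 0 := by linarith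
          have h1 : (2 * |s|) ^ (1 - α)⁻¹ ≤ R := le_max_right _ _
          have h2 : ((2 * |s|) ^ (1 - α)⁻¹) ^ (1 - α) ≤ r ^ (1 - α) :=
            Real.rpow_le_rpow (by positivity) (h1.trans h) (by linarith)
          rwa [Real.rpow_inv_rpow (by positivity) hne] at h2
        have hkey : |s| * r ^ α ≤ r / 2 := by
          have h3 : (2 * |s|) * r ^ α ≤ r ^ (1 - α) * r ^ α :=
            mul_le_mul_of_nonneg_right h2s (Real.rpow_nonneg hr0 _)
          rw [← Real.rpow_add hrpos, sub_add_cancel, Real.rpow_one] at h3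
          linarith
        have hK : (1 / (2 + |s|)) * r ≤ r / 2 := by
          rw [div_mul_eq_mul_div, div_le_div_iff₀ (by positivity) two_pos]
          nlinarith [abs_nonneg s, hr0]
        calc (1 / (2 + |s|)) * r - (|s| + R) ≤ r / 2 - 0 := by
              have : (0:ℝ) ≤ |s| + R := by positivity
              linarith
          _ = r / 2 := by ring
          _ ≤ |Bmap i s x - Bmap i s y| := by linarith
      · -- r small
        have h1 : (1 / (2 + |s|)) * r ≤ r := by
          have h2 : (1 / (2 + |s|)) ≤ 1 := by
            rw [div_le_one (by positivity)]; linarith [abs_nonneg s]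
          nlinarith
        calc (1 / (2 + |s|)) * r - (|s| + R) ≤ r - (|s| + R) := by linarith
          _ ≤ 0 := by linarith [abs_nonneg s]
          _ ≤ |Bmap i s x - Bmap i s y| := abs_nonneg _
    · -- upper bound
      have : |s| * r ^ α ≤ |s| * (r + 1) :=
        mul_le_mul_of_nonneg_left hra (abs_nonneg s)
      calc |Bmap i s x - Bmap i s y| ≤ r + |s| * r ^ α := hBub
        _ ≤ r + |s| * (r + 1) := by linarith
        _ ≤ (2 + |s|) * r + (|s| + R) := by nlinarith [abs_nonneg s, hr0]
  · -- conjugation formula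
    intro x hx
    simp only [Set.mem_Ici] at hx
    have hα1' : i / (i + 1) = 1 - α := by
      rw [hα]; field_simp; ring
    rw [hα1']
    have hdiv : (x / t) ^ α = x ^ α / t ^ α := Real.div_rpow hx ht.le α
    simp only [Bmap, ← hα, hdiv]
    rw [mul_add, mul_div_cancel₀ _ ht.ne']
    have : t * (s * (x ^ α / t ^ α)) = s * (t / t ^ α) * x ^ α := by ring
    rw [this]
    have htt : t / t ^ α = t ^ (1 - α) := by
      rw [Real.rpow_sub ht, Real.rpow_one]
    rw [htt]
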